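/- arXiv:2302.13660 — 2 statements merged into one kernel-verified Lean document; each statement's English description precedes it below -/
import Mathlib

section
/- For a linearly ordered field F, the Cut Axiom (CA) holds in F if and only if the Lebesgue Integral Property (LIP) holds in F. -/
namespace Littlewood

variable {F : Type*} [Field F] [LinearOrder F] [IsStrictOrderedRing F]

/-- A sequence `s` in `F` converges to `L`. -/
def SeqConv (s : ℕ → F) (L : F) : Prop :=
  ∀ ε : F, 0 < ε → ∃ N : ℕ, ∀ n, N ≤ n → s n - L ∈ Set.Ioo (-ε) ε

/-- `φ` is a step function on `[a,b]`: there is a partition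
`a = x 0 < x 1 < ⋯ < x n = b` such that `φ` is constant on each open subinterval. -/
def IsStepOn (a b : F) (φ : F → F) : Prop :=
  ∃ (n : ℕ) (x : ℕ → F), x 0 = a ∧ x n = b ∧ (∀ i < n, x i < x (i + 1)) ∧
    ∀ i < n, ∃ M : F, ∀ t ∈ Set.Ioo (x i) (x (i + 1)), φ t = M

/-- `I` is the integral of the step function `φ` over `[a,b]`, computed from
an admissible partition `a = x 0 < ⋯ < x n = b` with constant values `M i`. -/
def HasStepIntegral (a b : F) (φ : F → F) (I : F) : Prop :=
  ∃ (n : ℕ) (x : ℕ → F) (M : ℕ → F), x 0 = a ∧ x n = b ∧ (∀ i < n, x i < x (i + 1)) ∧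
    (∀ i < n, ∀ t ∈ Set.Ioo (x i) (x (i + 1)), φ t = M i) ∧
    I = ∑ i ∈ Finset.range n, M i * (x (i + 1) - x i)

/-- `S ⊆ [a,b]` has measure zero: for every `ε > 0` there is a countable family of
open intervals `(c n, d n) ⊆ [a,b]` covering `S` whose partial sums of lengths
converge to a sum less than `ε`. -/
def NullSet (a b : F) (S : Set F) : Prop :=
  ∀ ε : F, 0 < ε → ∃ c d : ℕ → F,
    (∀ n, c n ≤ d n ∧ Set.Ioo (c n) (d n) ⊆ Set.Icc a b) ∧
    S ⊆ (⋃ n, Set.Ioo (c n) (d n)) ∧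
    ∃ s : F, s < ε ∧ SeqConv (fun N => ∑ k ∈ Finset.range N, (d k - c k)) s

/-- `Q` holds almost everywhere in `[a,b]`. -/
def AEOn (a b : F) (Q : F → Prop) : Prop :=
  NullSet a b {x ∈ Set.Icc a b | ¬ Q x}

/-- `φ` is a monotonically decreasing sequence of step functions `[a,b] → P ∪ {0}`
converging to `f` almost everywhere in `[a,b]`. -/
def ApproxSeq (a b : F) (φ : ℕ → F → F) (f : F → F) : Prop :=
  (∀ n, IsStepOn a b (φ n)) ∧
  (∀ n, ∀ x ∈ Set.Icc a b, 0 ≤ φ n x) ∧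
  (∀ n, ∀ x ∈ Set.Icc a b, φ (n + 1) x ≤ φ n x) ∧
  AEOn a b fun x => SeqConv (fun n => φ n x) (f x)

/-- A nonnegative-valued function on `[a,b]` is Lebesgue measurable. -/
def LebMeasurableNN (a b : F) (f : F → F) : Prop :=
  ∃ φ : ℕ → F → F, ApproxSeq a b φ f

/-- A nonnegative-valued function on `[a,b]` has Lebesgue integral `I`:
it is Lebesgue measurable and for every monotonically decreasing sequence of
nonnegative step functions converging to `f` a.e., the sequence of their
(step) integrals converges to `I`. -/
def HasLebIntegralNN (a b : F) (f : F → F) (I : F) : Prop :=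
  LebMeasurableNN a b f ∧
    ∀ φ : ℕ → F → F, ApproxSeq a b φ f →
      ∀ J : ℕ → F, (∀ n, HasStepIntegral a b (φ n) (J n)) → SeqConv J I

/-- A function `[a,b] → F` is Lebesgue measurable (via its nonnegative parts). -/
def LebMeasurable (a b : F) (f : F → F) : Prop :=
  LebMeasurableNN a b (fun x => max (f x) 0) ∧ LebMeasurableNN a b fun x => max (-f x) 0

/-- A function `[a,b] → F` has a Lebesgue integral (via its nonnegative parts). -/
def HasLebIntegral (a b : F) (f : F → F) : Prop :=
  (∃ I : F, HasLebIntegralNN a b (fun x => max (f x) 0) I) ∧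
  ∃ I : F, HasLebIntegralNN a b (fun x => max (-f x) 0) I

/-- The characteristic function of `E`. -/
noncomputable def chi (E : Set F) : F → F := E.indicator fun _ => 1

/-- `E ⊆ [a,b]` is a measurable set: its characteristic function is Lebesgue measurable. -/
def MeasSet (a b : F) (E : Set F) : Prop := LebMeasurableNN a b (chi E)

/-- `E` has Lebesgue measure: `E` has measure zero or `χ_E` has a Lebesgue integral. -/
def HasLebMeasure (a b : F) (E : Set F) : Prop :=
  NullSet a b E ∨ ∃ I : F, HasLebIntegralNN a b (chi E) I

/-- `S` is an interval with endpoints `c ≤ d` (any of the four kinds). -/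
def IsIntervalWith (S : Set F) (c d : F) : Prop :=
  S = Set.Icc c d ∨ S = Set.Ico c d ∨ S = Set.Ioc c d ∨ S = Set.Ioo c d

/-- `S` is an interval. -/
def IsInterval (S : Set F) : Prop := ∃ c d : F, IsIntervalWith S c d

/-- `f` is continuous on `D`. -/
def ContOn (D : Set F) (f : F → F) : Prop :=
  ∀ c ∈ D, ∀ ε : F, 0 < ε → ∃ δ : F, 0 < δ ∧
    ∀ x ∈ D ∩ Set.Ioo (c - δ) (c + δ), f x - f c ∈ Set.Ioo (-ε) ε

/-- The functions `g n` converge uniformly to `f` on `D`. -/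
def UnifConvOn (D : Set F) (g : ℕ → F → F) (f : F → F) : Prop :=
  ∀ ε : F, 0 < ε → ∃ N : ℕ, ∀ n, N ≤ n → ∀ x ∈ D, f x - g n x ∈ Set.Ioo (-ε) ε

/-- `A` is a cut of `F`. -/
def IsCut (A : Set F) : Prop :=
  A.Nonempty ∧ A ≠ Set.univ ∧ ∀ x ∈ A, ∀ y ∉ A, x < y

/-- `c` is a cut point of `A`. -/
def IsCutPoint (A : Set F) (c : F) : Prop :=
  ∀ x ∈ A, ∀ y ∉ A, x ≤ c ∧ c ≤ y

variable (F) in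
/-- The Cut Axiom: every cut of `F` has a cut point. -/
def CutAxiom : Prop := ∀ A : Set F, IsCut A → ∃ c : F, IsCutPoint A c

variable (F) in
/-- Lebesgue Integral Property. -/
def LIP : Prop :=
  ∀ a b : F, a ≤ b → ∀ f : F → F, LebMeasurable a b f → HasLebIntegral a b f

variable (F) in
/-- Lebesgue Measure Property. -/
def LMP : Prop :=
  ∀ a b : F, a ≤ b → ∀ E ⊆ Set.Icc a b, MeasSet a b E → HasLebMeasure a b E

variable (F) in
/-- Littlewood's First Principle. -/
def LP1 : Prop :=
  ∀ a b : F, a ≤ b → ∀ E ⊆ Set.Icc a b, MeasSet a b E → ∀ ε : F, 0 < ε →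
    ∃ (m : ℕ) (I : ℕ → Set F), (∀ i < m, IsInterval (I i) ∧ I i ⊆ Set.Icc a b) ∧
      ∃ J : F, HasLebIntegralNN a b
        (chi ((E \ ⋃ i < m, I i) ∪ ((⋃ i < m, I i) \ E))) J ∧ J < ε

variable (F) in
/-- Littlewood's Second Principle. -/
def LP2 : Prop :=
  ∀ a b : F, a ≤ b → ∀ f : F → F, LebMeasurable a b f → ∀ ε : F, 0 < ε →
    ∃ E ⊆ Set.Icc a b, MeasSet a b E ∧ ContOn (Set.Icc a b \ E) f ∧
      ∃ J : F, HasLebIntegralNN a b (chi E) J ∧ J < ε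

variable (F) in
/-- Littlewood's Third Principle. -/
def LP3 : Prop :=
  ∀ a b : F, a ≤ b → ∀ φ : ℕ → F → F, (∀ n, LebMeasurable a b (φ n)) →
    ∀ f : F → F, AEOn a b (fun x => SeqConv (fun n => φ n x) (f x)) →
    ∀ ε : F, 0 < ε →
      ∃ E ⊆ Set.Icc a b, MeasSet a b E ∧ UnifConvOn (Set.Icc a b \ E) φ f ∧
        ∃ J : F, HasLebIntegralNN a b (chi E) J ∧ J < ε

section Aux

lemma seqConv_const (L : F) : SeqConv (fun _ => L) L := by
  intro ε hε
  refine ⟨0, fun n _ => ?_⟩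
  simp only [sub_self, Set.mem_Ioo]
  exact ⟨neg_lt_zero.2 hε, hε⟩

lemma seqConv_of_eventually_eq {s : ℕ → F} {L : F} (N : ℕ) (h : ∀ n, N ≤ n → s n = L) :
    SeqConv s L := by
  intro ε hε
  refine ⟨N, fun n hn => ?_⟩
  rw [h n hn]
  simp only [sub_self, Set.mem_Ioo]
  exact ⟨neg_lt_zero.2 hε, hε⟩

lemma nullSet_of_eq_empty {a b : F} {S : Set F} (h : S = ∅) : NullSet a b S := by
  intro ε hε
  refine ⟨fun _ => a, fun _ => a, fun n => ⟨le_rfl, by simp⟩, by simp [h], 0, hε, ?_⟩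
  have h2 : (fun N : ℕ => ∑ k ∈ Finset.range N, ((fun _ : ℕ => a) k - (fun _ : ℕ => a) k))
      = fun _ : ℕ => (0 : F) := by
    funext N; simp
  rw [h2]
  exact seqConv_const 0

lemma aeOn_of_forall {a b : F} {Q : F → Prop} (h : ∀ x ∈ Set.Icc a b, Q x) : AEOn a b Q := by
  refine nullSet_of_eq_empty ?_
  ext x
  simp only [Set.mem_setOf_eq, Set.mem_empty_iff_false, iff_false, not_and, not_not]
  exact fun hx => h x hx

lemma chi_nonneg (E : Set F) (x : F) : 0 ≤ chi E x :=
  Set.indicator_nonneg (fun _ _ => zero_le_one) x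

lemma max_chi (E : Set F) : (fun x : F => max (chi E x) 0) = chi E :=
  funext fun x => max_eq_left (chi_nonneg E x)

lemma max_neg_chi (E : Set F) : (fun x : F => max (-(chi E x)) 0) = fun _ => (0 : F) :=
  funext fun x => max_eq_right (neg_nonpos.2 (chi_nonneg E x))

lemma isStepOn_const {a b : F} (hab : a ≤ b) (M : F) : IsStepOn a b (fun _ => M) := by
  rcases eq_or_lt_of_le hab with h | h
  · exact ⟨0, fun _ => a, rfl, h ▸ rfl, by omega, by omega⟩
  · refine ⟨1, fun i => if i = 0 then a else b, rfl, rfl, ?_, ?_⟩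
    · intro i hi
      interval_cases i
      simpa using h
    · intro i hi
      exact ⟨M, fun t _ => rfl⟩

lemma approxSeq_zero {a b : F} (hab : a ≤ b) {g : F → F} (hg : ∀ x ∈ Set.Icc a b, g x = 0) :
    ApproxSeq a b (fun _ _ => 0) g :=
  ⟨fun _ => isStepOn_const hab 0, fun _ _ _ => le_rfl, fun _ _ _ => le_rfl,
    aeOn_of_forall fun x hx => by rw [hg x hx]; exact seqConv_const 0⟩

lemma step_two {a c b : F} (h1 : a < c) (h2 : c < b) {φ : F → F} {M0 M1 : F}
    (hv0 : ∀ t ∈ Set.Ioo a c, φ t = M0) (hv1 : ∀ t ∈ Set.Ioo c b, φ t = M1) :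
    IsStepOn a b φ ∧ HasStepIntegral a b φ (M0 * (c - a) + M1 * (b - c)) := by
  set x : ℕ → F := fun i => if i = 0 then a else if i = 1 then c else b with hx
  have hx0 : x 0 = a := rfl
  have hx1 : x 1 = c := rfl
  have hx2 : x 2 = b := rfl
  have hmono : ∀ i < 2, x i < x (i + 1) := by
    intro i hi
    interval_cases i
    · simpa [hx] using h1
    · simpa [hx] using h2
  set M : ℕ → F := fun i => if i = 0 then M0 else M1 with hM
  have hval : ∀ i < 2, ∀ t ∈ Set.Ioo (x i) (x (i + 1)), φ t = M i := by
    intro i hi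
    interval_cases i
    · simpa [hx, hM] using hv0
    · simpa [hx, hM] using hv1
  refine ⟨⟨2, x, hx0, hx2, hmono, fun i hi => ⟨M i, hval i hi⟩⟩,
    ⟨2, x, M, hx0, hx2, hmono, hval, ?_⟩⟩
  simp [Finset.sum_range_succ, hx, hM]

end Aux
section Reverse

/-- Key construction: from LIP, for any antitone sequence `ψ` inside `(a0, b0)`,
the sequence `ψ n - a0` converges to something. -/
lemma key_seqConv (hLIP : LIP F) {a0 b0 : F} (hab : a0 < b0) {ψ : ℕ → F}
    (hmem : ∀ n, ψ n ∈ Set.Ioo a0 b0) (hanti : ∀ n m, n ≤ m → ψ m ≤ ψ n) :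
    ∃ I : F, SeqConv (fun n => ψ n - a0) I := by
  set E : Set F := {x | a0 < x ∧ ∀ n, x < ψ n} with hE
  set φ : ℕ → F → F := fun n => chi (Set.Ioo a0 (ψ n)) with hφ
  -- step structure and integral of φ n
  have hstep : ∀ n, IsStepOn a0 b0 (φ n) ∧
      HasStepIntegral a0 b0 (φ n) (1 * (ψ n - a0) + 0 * (b0 - ψ n)) := by
    intro n
    refine step_two (hmem n).1 (hmem n).2 ?_ ?_
    · intro t ht
      exact Set.indicator_of_mem ht _
    · intro t ht
      refine Set.indicator_of_notMem ?_ _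
      intro ht2
      exact absurd ht.1 (not_lt.2 ht2.2.le)
  -- approx sequence for chi E
  have happrox : ApproxSeq a0 b0 φ (chi E) := by
    refine ⟨fun n => (hstep n).1, fun n x _ => chi_nonneg _ x, ?_, ?_⟩
    · intro n x _
      exact Set.indicator_le_indicator_of_subset
        (Set.Ioo_subset_Ioo le_rfl (hanti n (n+1) (Nat.le_succ n))) (fun _ => zero_le_one) x
    · refine aeOn_of_forall fun x _ => ?_
      by_cases hxE : x ∈ E
      · have hxE' : a0 < x ∧ ∀ n, x < ψ n := hxE
        have : ∀ n, φ n x = 1 := fun n =>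
          Set.indicator_of_mem (Set.mem_Ioo.2 ⟨hxE'.1, hxE'.2 n⟩) _
        have hc : chi E x = 1 := Set.indicator_of_mem hxE _
        rw [hc]
        refine seqConv_of_eventually_eq 0 fun n _ => this n
      · have hc : chi E x = 0 := Set.indicator_of_notMem hxE _
        rw [hc]
        rw [hE, Set.mem_setOf_eq, not_and_or] at hxE
        rcases hxE with hx1 | hx2
        · refine seqConv_of_eventually_eq 0 fun n _ => ?_
          refine Set.indicator_of_notMem (fun ht => hx1 ht.1) _
        · push_neg at hx2
          obtain ⟨n0, hn0⟩ := hx2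
          refine seqConv_of_eventually_eq n0 fun n hn => ?_
          refine Set.indicator_of_notMem (fun ht => ?_) _
          exact absurd (lt_of_lt_of_le ht.2 (hanti n0 n hn)) (not_lt.2 hn0)
  -- chi E is Lebesgue measurable
  have hmeas : LebMeasurable a0 b0 (chi E) := by
    constructor
    · rw [max_chi]
      exact ⟨φ, happrox⟩
    · rw [max_neg_chi]
      exact ⟨fun _ _ => 0, approxSeq_zero hab.le (fun _ _ => rfl)⟩
  obtain ⟨⟨I, hI⟩, -⟩ := hLIP a0 b0 hab.le (chi E) hmeas
  refine ⟨I, ?_⟩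
  have h2 := hI.2 φ (by rw [max_chi]; exact happrox) (fun n => ψ n - a0) ?_
  · exact h2
  · intro n
    have := (hstep n).2
    simpa using this
end Reverse
section Reverse2

lemma lip_to_cutAxiom (hLIP : LIP F) : CutAxiom F := by
  intro A hA
  by_contra hno
  push_neg at hno
  obtain ⟨⟨a0, ha0⟩, hAne, hlt⟩ := hA
  by_cases hArch : ∀ x : F, ∃ n : ℕ, x < n
  · -- Archimedean case: use the gap to derive a contradiction
    -- small gaps exist
    have hsmall : ∀ δ : F, 0 < δ → ∃ b', b' ∉ A ∧ ∃ a' ∈ A, b' < a' + δ := by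
      intro δ hδ
      by_contra hbig
      push_neg at hbig
      -- every element of A plus δ/2 stays in A
      have hstepA : ∀ a' ∈ A, a' + δ / 2 ∈ A := by
        intro a' ha'
        by_contra hout
        have := hbig (a' + δ / 2) hout a' ha'
        linarith
      have hiter : ∀ k : ℕ, a0 + k * (δ / 2) ∈ A := by
        intro k
        induction k with
        | zero => simpa using ha0
        | succ k ih =>
          have := hstepA _ ih
          have heq : a0 + (k + 1 : ℕ) * (δ / 2) = a0 + k * (δ / 2) + δ / 2 := by
            push_cast; ring
          rwa [heq]
      obtain ⟨b1, hb1⟩ := (Set.ne_univ_iff_exists_notMem A).1 hAne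
      obtain ⟨n, hn⟩ := hArch ((b1 - a0) / (δ / 2))
      have hlt1 := hlt _ (hiter n) _ hb1
      have h2 : b1 - a0 < n * (δ / 2) := by
        rw [div_lt_iff₀ (by positivity)] at hn
        linarith
      linarith
    have hsmall' : ∀ n : ℕ, ∃ b', b' ∉ A ∧ ∃ a' ∈ A, b' < a' + 1 / (n + 1) := by
      intro n
      exact hsmall _ (by positivity)
    choose u hu1 hu2 using hsmall'
    -- antitone version
    set ψ : ℕ → F := fun n => Nat.rec (u 0) (fun k ih => min ih (u (k + 1))) n with hψ
    have hψ0 : ψ 0 = u 0 := rfl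
    have hψs : ∀ n, ψ (n + 1) = min (ψ n) (u (n + 1)) := fun n => rfl
    have hψnotA : ∀ n, ψ n ∉ A := by
      intro n
      induction n with
      | zero => exact hu1 0
      | succ n ih =>
        rw [hψs]
        rcases min_cases (ψ n) (u (n + 1)) with h | h <;> rw [h.1]
        · exact ih
        · exact hu1 (n + 1)
    have hψanti1 : ∀ n, ψ (n + 1) ≤ ψ n := fun n => by rw [hψs]; exact min_le_left _ _
    have hψanti : ∀ n m, n ≤ m → ψ m ≤ ψ n := by
      intro n m hnm
      induction m with
      | zero => simp_all
      | succ m ih =>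
        rcases Nat.lt_or_ge n (m + 1) with h | h
        · exact le_trans (hψanti1 m) (ih (by omega))
        · have : n = m + 1 := by omega
          rw [this]
    have hψu : ∀ n, ψ n ≤ u n := by
      intro n
      cases n with
      | zero => exact le_rfl
      | succ n => rw [hψs]; exact min_le_right _ _
    have hψsmall : ∀ n, ∃ a' ∈ A, ψ n < a' + 1 / (n + 1) := by
      intro n
      obtain ⟨a', ha', hlt'⟩ := hu2 n
      exact ⟨a', ha', lt_of_le_of_lt (hψu n) hlt'⟩
    set b0 : F := ψ 0 + 1 with hb0
    have hmem : ∀ n, ψ n ∈ Set.Ioo a0 b0 := by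
      intro n
      refine ⟨hlt _ ha0 _ (hψnotA n), ?_⟩
      have := hψanti 0 n (Nat.zero_le n)
      linarith
    obtain ⟨I, hI⟩ := key_seqConv hLIP (lt_of_lt_of_le (hmem 0).1 (by linarith)) hmem hψanti
    -- I + a0 is a cut point: contradiction
    refine hno (I + a0) ?_
    intro x hx y hy
    constructor
    · by_contra hcx
      push_neg at hcx
      obtain ⟨N, hN⟩ := hI (x - (I + a0)) (by linarith)
      have h1 := (hN N le_rfl).2
      have h2 := hlt x hx _ (hψnotA N)
      simp only at h1
      linarith
    · by_contra hcy
      push_neg at hcy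
      -- find y' ∉ A with y' < y
      have hyy : ∃ y', y' ∉ A ∧ y' < y := by
        have := hno y
        rw [IsCutPoint] at this
        push_neg at this
        obtain ⟨x', hx', y', hy', hbad⟩ := this
        exact ⟨y', hy', hbad (hlt x' hx' y hy).le⟩
      obtain ⟨y', hy', hy'y⟩ := hyy
      obtain ⟨m, hm⟩ := hArch (1 / (y - y'))
      obtain ⟨N, hN⟩ := hI ((I + a0) - y) (by linarith)
      set n : ℕ := max N m with hn
      have hn1 : (1 : F) / (n + 1) < y - y' := by
        rw [div_lt_iff₀ (by positivity)]
        rw [div_lt_iff₀ (by linarith)] at hm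
        have hmn : (m : F) ≤ n := by exact_mod_cast Nat.cast_le.2 (le_max_right N m)
        nlinarith [sub_pos.2 hy'y]
      obtain ⟨a', ha', ha'lt⟩ := hψsmall n
      have h3 : a' < y' := hlt a' ha' y' hy'
      have h4 : ψ n < y := by linarith
      have h5 := (hN n (le_max_left N m)).1
      simp only at h5
      linarith
  · -- non-Archimedean case
    push_neg at hArch
    obtain ⟨x0, hx0⟩ := hArch
    have hx0' : ∀ n : ℕ, (n : F) ≤ x0 := hx0
    have hx0pos : (0 : F) < x0 := lt_of_lt_of_le one_pos (by exact_mod_cast hx0' 1)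
    set t : F := 1 / x0 with ht
    have htpos : 0 < t := by positivity
    have htle : ∀ k : ℕ, 0 < k → t ≤ 1 / (k : F) := by
      intro k hk
      have hkpos : (0 : F) < k := by exact_mod_cast hk
      exact one_div_le_one_div_of_le hkpos (hx0' k)
    set ψ : ℕ → F := fun n => 1 / 2 + 1 / (n + 3) with hψ
    have hmem : ∀ n, ψ n ∈ Set.Ioo (0 : F) 1 := by
      intro n
      constructor
      · positivity
      · have h3 : (3 : F) ≤ (n : F) + 3 := by
          have : (0 : F) ≤ n := Nat.cast_nonneg n
          linarith
        have := one_div_le_one_div_of_le (by norm_num : (0:F) < 3) h3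
        rw [hψ]
        simp only
        calc 1 / 2 + 1 / ((n : F) + 3) ≤ 1 / 2 + 1 / 3 := by linarith
          _ < 1 := by norm_num
    have hanti : ∀ n m : ℕ, n ≤ m → ψ m ≤ ψ n := by
      intro n m hnm
      have h1 : (n : F) + 3 ≤ (m : F) + 3 := by
        have : (n : F) ≤ m := by exact_mod_cast hnm
        linarith
      have := one_div_le_one_div_of_le (by positivity : (0:F) < (n : F) + 3) h1
      simp only [hψ]
      linarith
    obtain ⟨I, hI⟩ := key_seqConv hLIP one_pos hmem hanti
    obtain ⟨N, hN⟩ := hI (t / 2) (by positivity)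
    have h1 := hN N le_rfl
    have h2 := hN (N + 1) (Nat.le_succ N)
    simp only [Set.mem_Ioo] at h1 h2
    have hd : ψ N - ψ (N + 1) = 1 / (((N : F) + 3) * ((N : F) + 4)) := by
      have hne1 : ((N : F) + 3) ≠ 0 := by positivity
      have hne2 : ((N : F) + 4) ≠ 0 := by positivity
      have : ((N : F) + 1 + 3) = (N : F) + 4 := by ring
      simp only [hψ]
      push_cast
      rw [this]
      field_simp
      ring
    have hkey : t ≤ 1 / (((N : F) + 3) * ((N : F) + 4)) := by
      have := htle ((N + 3) * (N + 4)) (by positivity)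
      have hcast : (((N + 3) * (N + 4) : ℕ) : F) = ((N : F) + 3) * ((N : F) + 4) := by
        push_cast; ring
      rwa [hcast] at this
    have hlt2 : ψ N - ψ (N + 1) < t := by
      have e1 := h1.2
      have e2 := h2.1
      linarith
    rw [hd] at hlt2
    linarith

end Reverse2
section RealSide

open MeasureTheory intervalIntegral Filter Set
open scoped NNReal ENNReal

lemma seqConv_real_iff {s : ℕ → ℝ} {L : ℝ} :
    SeqConv s L ↔ Tendsto s atTop (nhds L) := by
  rw [Metric.tendsto_atTop]
  constructor
  · intro h ε hε
    obtain ⟨N, hN⟩ := h ε hε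
    refine ⟨N, fun n hn => ?_⟩
    have := hN n hn
    rw [Set.mem_Ioo] at this
    rw [Real.dist_eq, abs_sub_lt_iff]
    constructor <;> linarith [this.1, this.2]
  · intro h ε hε
    obtain ⟨N, hN⟩ := h ε hε
    refine ⟨N, fun n hn => ?_⟩
    have := hN n hn
    rw [Real.dist_eq, abs_sub_lt_iff] at this
    rw [Set.mem_Ioo]
    constructor <;> linarith [this.1, this.2]

lemma nullSet_volume {a b : ℝ} {S : Set ℝ} (h : NullSet a b S) : volume S = 0 := by
  have hle : ∀ ε : ℝ≥0, 0 < ε → volume S ≤ (ε : ℝ≥0∞) := by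
    intro ε hε
    obtain ⟨c, d, hcd, hcover, s, hs, hconv⟩ := h ε (by exact_mod_cast hε)
    have hnn : ∀ k, 0 ≤ d k - c k := fun k => sub_nonneg.2 (hcd k).1
    have hsum : HasSum (fun k => d k - c k) s :=
      (hasSum_iff_tendsto_nat_of_nonneg hnn s).2 (seqConv_real_iff.1 hconv)
    calc volume S ≤ volume (⋃ n, Set.Ioo (c n) (d n)) := measure_mono hcover
      _ ≤ ∑' n, volume (Set.Ioo (c n) (d n)) := measure_iUnion_le _
      _ = ∑' n, ENNReal.ofReal (d n - c n) := by simp [Real.volume_Ioo]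
      _ = ENNReal.ofReal s := by
          rw [← ENNReal.ofReal_tsum_of_nonneg hnn hsum.summable, hsum.tsum_eq]
      _ ≤ (ε : ℝ≥0∞) := by
          rw [← ENNReal.ofReal_coe_nnreal]
          exact ENNReal.ofReal_le_ofReal hs.le
  refine le_antisymm ?_ zero_le
  refine ENNReal.le_of_forall_pos_le_add fun ε hε _ => ?_
  simpa using hle ε hε

lemma partition_le {x : ℕ → ℝ} {n : ℕ} (hmono : ∀ i < n, x i < x (i + 1)) :
    ∀ k ≤ n, x 0 ≤ x k := by
  intro k hk
  induction k with
  | zero => exact le_rfl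
  | succ k ih => exact le_trans (ih (by omega)) (hmono k (by omega)).le

lemma hasStepIntegral_real {a b : ℝ} {φ : ℝ → ℝ} {J : ℝ} (h : HasStepIntegral a b φ J) :
    IntegrableOn φ (Set.Ioo a b) volume ∧ ∫ x in Set.Ioo a b, φ x = J := by
  obtain ⟨n, x, M, hx0, hxn, hmono, hval, hsum⟩ := h
  subst hx0
  subst hxn
  have hpiece : ∀ i < n, IntervalIntegrable φ volume (x i) (x (i + 1)) ∧
      ∫ t in (x i)..(x (i + 1)), φ t = M i * (x (i + 1) - x i) := by
    intro i hi
    have hlt := hmono i hi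
    have hae : φ =ᵐ[volume.restrict (Set.Ioo (x i) (x (i + 1)))] fun _ => M i :=
      (ae_restrict_iff' measurableSet_Ioo).2 (ae_of_all _ (hval i hi))
    constructor
    · rw [intervalIntegrable_iff_integrableOn_Ioo_of_le hlt.le]
      exact (integrableOn_const measure_Ioo_lt_top.ne).congr hae.symm
    · rw [intervalIntegral.integral_of_le hlt.le, MeasureTheory.integral_Ioc_eq_integral_Ioo,
        MeasureTheory.integral_congr_ae hae, MeasureTheory.setIntegral_const,
        Real.volume_real_Ioo_of_le hlt.le]
      rw [smul_eq_mul, mul_comm]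
  have htot : ∀ k ≤ n, IntervalIntegrable φ volume (x 0) (x k) := by
    intro k hk
    induction k with
    | zero => exact IntervalIntegrable.refl
    | succ k ih => exact (ih (by omega)).trans ((hpiece k (by omega)).1)
  have hab : x 0 ≤ x n := partition_le hmono n le_rfl
  have hsplit := intervalIntegral.sum_integral_adjacent_intervals
    (fun i hi => (hpiece i hi).1)
  constructor
  · have := htot n le_rfl
    rwa [intervalIntegrable_iff_integrableOn_Ioo_of_le hab] at this
  · have heq : ∫ t in Set.Ioo (x 0) (x n), φ t = ∫ t in (x 0)..(x n), φ t := by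
      rw [intervalIntegral.integral_of_le hab, MeasureTheory.integral_Ioc_eq_integral_Ioo]
    rw [heq, ← hsplit, hsum]
    exact Finset.sum_congr rfl fun i hi => (hpiece i (Finset.mem_range.1 hi)).2

end RealSide
section RealSide2

open MeasureTheory Filter

lemma hasLebIntegralNN_real {a b : ℝ} {g : ℝ → ℝ} (hg : LebMeasurableNN a b g) :
    HasLebIntegralNN a b g (∫ x in Set.Ioo a b, g x) := by
  refine ⟨hg, ?_⟩
  intro φ hφ J hJ
  obtain ⟨hsteps, hnonneg, hdec, hae⟩ := hφ
  have hchain : ∀ n, ∀ x ∈ Set.Icc a b, φ n x ≤ φ 0 x := by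
    intro n
    induction n with
    | zero => exact fun x _ => le_rfl
    | succ n ih => exact fun x hx => le_trans (hdec n x hx) (ih x hx)
  have hint : ∀ n, IntegrableOn (φ n) (Set.Ioo a b) volume :=
    fun n => (hasStepIntegral_real (hJ n)).1
  have hJeq : ∀ n, J n = ∫ x in Set.Ioo a b, φ n x :=
    fun n => ((hasStepIntegral_real (hJ n)).2).symm
  have hZ : volume {x ∈ Set.Icc a b | ¬ SeqConv (fun n => φ n x) (g x)} = 0 :=
    nullSet_volume hae
  have hlim : ∀ᵐ x ∂(volume.restrict (Set.Ioo a b)),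
      Tendsto (fun n => φ n x) atTop (nhds (g x)) := by
    refine (ae_restrict_iff' measurableSet_Ioo).2 ?_
    rw [ae_iff]
    refine measure_mono_null ?_ hZ
    intro x hx
    rw [Set.mem_setOf_eq, _root_.not_imp] at hx
    exact ⟨Set.Ioo_subset_Icc_self hx.1, fun hsc => hx.2 (seqConv_real_iff.1 hsc)⟩
  have hbound : ∀ n, ∀ᵐ x ∂(volume.restrict (Set.Ioo a b)), ‖φ n x‖ ≤ φ 0 x := by
    intro n
    refine (ae_restrict_iff' measurableSet_Ioo).2 (ae_of_all _ fun x hx => ?_)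
    rw [Real.norm_eq_abs, abs_of_nonneg (hnonneg n x (Set.Ioo_subset_Icc_self hx))]
    exact hchain n x (Set.Ioo_subset_Icc_self hx)
  have hDCT := MeasureTheory.tendsto_integral_of_dominated_convergence (φ 0)
    (fun n => (hint n).aestronglyMeasurable) (hint 0) hbound hlim
  rw [seqConv_real_iff]
  have hfun : J = fun n => ∫ x in Set.Ioo a b, φ n x := funext hJeq
  rw [hfun]
  exact hDCT

lemma lipReal : LIP ℝ := by
  intro a b hab f hf
  exact ⟨⟨_, hasLebIntegralNN_real hf.1⟩, ⟨_, hasLebIntegralNN_real hf.2⟩⟩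

end RealSide2
section Transfer

variable {G : Type*} [Field G] [LinearOrder G] [IsStrictOrderedRing G]

lemma ors_symm_apply (e : F ≃+*o G) (x : F) : e.symm (e x) = x :=
  e.toRingEquiv.symm_apply_apply x

lemma ors_apply_symm (e : F ≃+*o G) (y : G) : e (e.symm y) = y :=
  e.toRingEquiv.apply_symm_apply y

lemma ors_lt_iff (e : F ≃+*o G) {x y : F} : e x < e y ↔ x < y := map_lt_map_iff e

lemma ors_le_iff (e : F ≃+*o G) {x y : F} : e x ≤ e y ↔ x ≤ y := map_le_map_iff e

lemma ors_max (e : F ≃+*o G) (x y : F) : e (max x y) = max (e x) (e y) := by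
  rcases le_total x y with h | h
  · rw [max_eq_right h, max_eq_right ((ors_le_iff e).2 h)]
  · rw [max_eq_left h, max_eq_left ((ors_le_iff e).2 h)]

lemma ors_pos (e : F ≃+*o G) {x : F} (h : 0 < x) : 0 < e x := by
  have := (ors_lt_iff e).2 h
  rwa [map_zero] at this

lemma ors_mem_Ioo (e : F ≃+*o G) {x u v : F} :
    e x ∈ Set.Ioo (e u) (e v) ↔ x ∈ Set.Ioo u v := by
  simp only [Set.mem_Ioo, ors_lt_iff]

lemma ors_mem_Icc (e : F ≃+*o G) {x u v : F} :
    e x ∈ Set.Icc (e u) (e v) ↔ x ∈ Set.Icc u v := by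
  simp only [Set.mem_Icc, ors_le_iff]

lemma seqConv_map (e : F ≃+*o G) {s : ℕ → F} {L : F} (h : SeqConv s L) :
    SeqConv (fun n => e (s n)) (e L) := by
  intro ε hε
  obtain ⟨N, hN⟩ := h (e.symm ε) (ors_pos e.symm hε)
  refine ⟨N, fun n hn => ?_⟩
  have hmem := hN n hn
  rw [Set.mem_Ioo] at hmem ⊢
  constructor
  · have := (ors_lt_iff e).2 hmem.1
    rwa [map_sub, map_neg, ors_apply_symm] at this
  · have := (ors_lt_iff e).2 hmem.2
    rwa [map_sub, ors_apply_symm] at this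

end Transfer
section Transfer2

variable {G : Type*} [Field G] [LinearOrder G] [IsStrictOrderedRing G]

lemma ors_symm_mem_Ioo (e : F ≃+*o G) {y : G} {u v : F} :
    e.symm y ∈ Set.Ioo u v ↔ y ∈ Set.Ioo (e u) (e v) := by
  rw [← ors_mem_Ioo e, ors_apply_symm]

lemma ors_symm_mem_Icc (e : F ≃+*o G) {y : G} {u v : F} :
    e.symm y ∈ Set.Icc u v ↔ y ∈ Set.Icc (e u) (e v) := by
  rw [← ors_mem_Icc e, ors_apply_symm]

lemma isStepOn_map (e : F ≃+*o G) {a b : F} {φ : F → F} (h : IsStepOn a b φ) :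
    IsStepOn (e a) (e b) (fun y => e (φ (e.symm y))) := by
  obtain ⟨n, x, hx0, hxn, hmono, hval⟩ := h
  refine ⟨n, fun i => e (x i), by simp only [hx0], by simp only [hxn],
    fun i hi => (ors_lt_iff e).2 (hmono i hi), ?_⟩
  intro i hi
  obtain ⟨M, hM⟩ := hval i hi
  refine ⟨e M, fun t ht => ?_⟩
  show e (φ (e.symm t)) = e M
  rw [hM _ ((ors_symm_mem_Ioo e).2 ht)]

lemma hasStepIntegral_map (e : F ≃+*o G) {a b : F} {φ : F → F} {J : F}
    (h : HasStepIntegral a b φ J) :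
    HasStepIntegral (e a) (e b) (fun y => e (φ (e.symm y))) (e J) := by
  obtain ⟨n, x, M, hx0, hxn, hmono, hval, hsum⟩ := h
  refine ⟨n, fun i => e (x i), fun i => e (M i), by simp only [hx0], by simp only [hxn],
    fun i hi => (ors_lt_iff e).2 (hmono i hi), ?_, ?_⟩
  · intro i hi t ht
    show e (φ (e.symm t)) = e (M i)
    rw [hval i hi _ ((ors_symm_mem_Ioo e).2 ht)]
  · rw [hsum, map_sum]
    exact Finset.sum_congr rfl fun i _ => by rw [map_mul, map_sub]

lemma nullSet_map (e : F ≃+*o G) {a b : F} {S : Set F} (h : NullSet a b S) :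
    NullSet (e a) (e b) {y | e.symm y ∈ S} := by
  intro ε hε
  obtain ⟨c, d, hcd, hcov, s, hs, hconv⟩ := h (e.symm ε) (ors_pos e.symm hε)
  refine ⟨fun k => e (c k), fun k => e (d k), ?_, ?_, e s, ?_, ?_⟩
  · intro k
    refine ⟨(ors_le_iff e).2 (hcd k).1, fun y hy => ?_⟩
    exact (ors_symm_mem_Icc e).1 ((hcd k).2 ((ors_symm_mem_Ioo e).2 hy))
  · intro y hy
    obtain ⟨k, hk⟩ := Set.mem_iUnion.1 (hcov hy)
    exact Set.mem_iUnion.2 ⟨k, (ors_symm_mem_Ioo e).1 hk⟩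
  · have := (ors_lt_iff e).2 hs
    rwa [ors_apply_symm] at this
  · have h2 := seqConv_map e hconv
    have h3 : (fun N => e (∑ k ∈ Finset.range N, (d k - c k)))
        = fun N => ∑ k ∈ Finset.range N, (e (d k) - e (c k)) := by
      funext N
      rw [map_sum]
      exact Finset.sum_congr rfl fun i _ => map_sub e _ _
    rwa [h3] at h2

lemma nullSet_mono {a b : F} {S T : Set F} (hST : S ⊆ T) (h : NullSet a b T) :
    NullSet a b S := by
  intro ε hε
  obtain ⟨c, d, h1, h2, h3⟩ := h ε hε
  exact ⟨c, d, h1, hST.trans h2, h3⟩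

lemma aeOn_map (e : F ≃+*o G) {a b : F} {Q : F → Prop} {Q' : G → Prop}
    (himp : ∀ x ∈ Set.Icc a b, Q x → Q' (e x)) (h : AEOn a b Q) :
    AEOn (e a) (e b) Q' := by
  refine nullSet_mono ?_ (nullSet_map e h)
  rintro y ⟨hy1, hy2⟩
  have hx1 : e.symm y ∈ Set.Icc a b := (ors_symm_mem_Icc e).2 hy1
  refine ⟨hx1, fun hQ => hy2 ?_⟩
  have := himp _ hx1 hQ
  rwa [ors_apply_symm] at this

lemma approxSeq_map (e : F ≃+*o G) {a b : F} {φ : ℕ → F → F} {f : F → F}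
    (h : ApproxSeq a b φ f) :
    ApproxSeq (e a) (e b) (fun n y => e (φ n (e.symm y))) (fun y => e (f (e.symm y))) := by
  obtain ⟨h1, h2, h3, h4⟩ := h
  refine ⟨fun n => isStepOn_map e (h1 n), ?_, ?_, ?_⟩
  · intro n y hy
    have := h2 n _ ((ors_symm_mem_Icc e).2 hy)
    have h5 := (ors_le_iff e).2 this
    rwa [map_zero] at h5
  · intro n y hy
    exact (ors_le_iff e).2 (h3 n _ ((ors_symm_mem_Icc e).2 hy))
  · refine aeOn_map e (fun x hx hQ => ?_) h4
    simp only [ors_symm_apply]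
    exact seqConv_map e hQ

lemma lebMeasurableNN_map (e : F ≃+*o G) {a b : F} {f : F → F} (h : LebMeasurableNN a b f) :
    LebMeasurableNN (e a) (e b) (fun y => e (f (e.symm y))) := by
  obtain ⟨φ, hφ⟩ := h
  exact ⟨_, approxSeq_map e hφ⟩

lemma lip_transfer (e : G ≃+*o F) (h : LIP G) : LIP F := by
  intro a b hab f hf
  set q : F ≃+*o G := e.symm with hq
  have hmax1 : (fun y => q ((fun x => max (f x) 0) (q.symm y)))
      = fun y => max (q (f (q.symm y))) 0 := by
    funext y
    simp only [ors_max, map_zero]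
  have hmax2 : (fun y => q ((fun x => max (-f x) 0) (q.symm y)))
      = fun y => max (-(q (f (q.symm y)))) 0 := by
    funext y
    simp only [ors_max, map_zero, map_neg]
  have hf1 := lebMeasurableNN_map q hf.1
  have hf2 := lebMeasurableNN_map q hf.2
  rw [hmax1] at hf1
  rw [hmax2] at hf2
  obtain ⟨⟨I1, hI1⟩, ⟨I2, hI2⟩⟩ := h (q a) (q b) ((ors_le_iff q).2 hab)
    (fun y => q (f (q.symm y))) ⟨hf1, hf2⟩
  constructor
  · refine ⟨q.symm I1, hf.1, ?_⟩
    intro ψ hψ J hJ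
    have hψ' := approxSeq_map q hψ
    rw [hmax1] at hψ'
    have hc := hI1.2 _ hψ' (fun n => q (J n)) (fun n => hasStepIntegral_map q (hJ n))
    have h2 := seqConv_map q.symm hc
    simpa only [ors_symm_apply] using h2
  · refine ⟨q.symm I2, hf.2, ?_⟩
    intro ψ hψ J hJ
    have hψ' := approxSeq_map q hψ
    rw [hmax2] at hψ'
    have hc := hI2.2 _ hψ' (fun n => q (J n)) (fun n => hasStepIntegral_map q (hJ n))
    have h2 := seqConv_map q.symm hc
    simpa only [ors_symm_apply] using h2

end Transfer2
theorem cutAxiom_iff_lebesgueIntegralProperty (F : Type*) [Field F] [LinearOrder F] [IsStrictOrderedRing F] :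
    CutAxiom F ↔ LIP F := by
  constructor
  · intro hCA
    classical
    have hSup : ∀ S : Set F, S.Nonempty → BddAbove S → ∃ c, IsLUB S c := by
      intro S hne hbdd
      obtain ⟨s0, hs0⟩ := hne
      obtain ⟨ub, hub⟩ := hbdd
      set A : Set F := {x | ∃ t ∈ S, x < t} with hA
      have hubA : ub ∉ A := by
        rintro ⟨t, ht, hlt⟩
        exact absurd hlt (not_lt.2 (hub ht))
      have hmemA : s0 - 1 ∈ A := ⟨s0, hs0, by linarith⟩
      have hcut : IsCut A := by
        refine ⟨⟨s0 - 1, hmemA⟩, ?_, ?_⟩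
        · intro huniv
          exact hubA (huniv ▸ Set.mem_univ ub)
        · rintro x ⟨t, ht, hxt⟩ y hy
          have : t ≤ y := not_lt.1 fun hlt => hy ⟨t, ht, hlt⟩
          exact lt_of_lt_of_le hxt this
      obtain ⟨c, hc⟩ := hCA A hcut
      refine ⟨c, ?_, ?_⟩
      · intro t ht
        by_contra hlt
        push_neg at hlt
        have hmid : (c + t) / 2 ∈ A := ⟨t, ht, by linarith⟩
        have := (hc _ hmid ub hubA).1
        linarith
      · intro y hy
        have hynot : y ∉ A := by
          rintro ⟨t, ht, hlt⟩
          exact absurd hlt (not_lt.2 (hy ht))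
        exact (hc _ hmemA y hynot).2
    letI : SupSet F :=
      ⟨fun S => if h : S.Nonempty ∧ BddAbove S then (hSup S h.1 h.2).choose else 0⟩
    have hsup_def : ∀ S : Set F, S.Nonempty → BddAbove S →
        IsLUB S (sSup S) := by
      intro S h1 h2
      have : sSup S = (hSup S h1 h2).choose := dif_pos ⟨h1, h2⟩
      rw [this]
      exact (hSup S h1 h2).choose_spec
    have hsup_junk : ∀ S : Set F, ¬(S.Nonempty ∧ BddAbove S) → sSup S = 0 := by
      intro S h
      exact dif_neg h
    have hnotbdd_univ : ¬BddAbove (Set.univ : Set F) := by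
      rintro ⟨u, hu⟩
      have := hu (Set.mem_univ (u + 1))
      linarith
    letI cc : ConditionallyCompleteLattice F :=
      conditionallyCompleteLatticeOfsSup F
        (fun x y => ⟨max x y, by
          rintro z (rfl | hz)
          · exact le_max_left _ _
          · rw [Set.mem_singleton_iff] at hz
            rw [hz]
            exact le_max_right _ _⟩)
        (fun x y => ⟨min x y, by
          rintro z (rfl | hz)
          · exact min_le_left _ _
          · rw [Set.mem_singleton_iff] at hz
            rw [hz]
            exact min_le_right _ _⟩)
        (fun S h1 h2 => hsup_def S h2 h1)
    letI cclo : ConditionallyCompleteLinearOrder F :=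
      { cc with
        le_total := le_total
        toDecidableLE := inferInstance
        toDecidableEq := inferInstance
        toDecidableLT := inferInstance
        compare_eq_compareOfLessAndEq := fun a b => LinearOrder.compare_eq_compareOfLessAndEq a b
        csSup_of_not_bddAbove := by
          intro S hS
          rw [hsup_junk S (fun h => hS h.2), hsup_junk ∅ (fun h => Set.not_nonempty_empty h.1)]
        csInf_of_not_bddBelow := by
          intro S hS
          show sSup (lowerBounds S) = sSup (lowerBounds ∅)
          rw [Set.not_nonempty_iff_eq_empty.1 hS, lowerBounds_empty]
          rw [hsup_junk ∅ (fun h => Set.not_nonempty_empty h.1),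
            hsup_junk Set.univ (fun h => hnotbdd_univ h.2)] }
    exact lip_transfer (LinearOrderedField.inducedOrderRingIso ℝ F) lipReal
  · exact lip_to_cutAxiom

end Littlewood
end

section
/- If a linearly ordered field F does not satisfy the Cut Axiom (that is, F has a gap), then the Lebesgue Measure Property fails in F: there exist a ≤ b in F and a measurable set E ⊆ [a,b] that does not have Lebesgue measure. -/
namespace Littlewood

variable {F : Type*} [Field F] [LinearOrder F] [IsStrictOrderedRing F]

section ProofAux

variable {F : Type*} [Field F] [LinearOrder F] [IsStrictOrderedRing F]

lemma seqConv_of_eventually {s : ℕ → F} {L : F} (h : ∃ N, ∀ n, N ≤ n → s n = L) :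
    SeqConv s L := by
  obtain ⟨N, hN⟩ := h
  intro ε hε
  refine ⟨N, fun n hn => ?_⟩
  rw [hN n hn, sub_self]
  exact Set.mem_Ioo.mpr ⟨neg_lt_zero.mpr hε, hε⟩

lemma chi_of_mem {E : Set F} {x : F} (h : x ∈ E) : chi E x = 1 :=
  Set.indicator_of_mem h _

lemma chi_of_not_mem {E : Set F} {x : F} (h : x ∉ E) : chi E x = 0 :=
  Set.indicator_of_notMem h _

lemma nullSet_empty {a b : F} (hab : a ≤ b) : NullSet a b (∅ : Set F) := by
  intro ε hε
  refine ⟨fun _ => a, fun _ => a, fun n => ⟨le_rfl, by simp⟩, by simp, 0, hε, ?_⟩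
  exact seqConv_of_eventually ⟨0, fun n _ => by simp⟩

lemma not_nullSet_of_left_mem {a b : F} {S : Set F} (ha : a ∈ S) : ¬ NullSet a b S := by
  intro h
  obtain ⟨c, d, hcd, hsub, _⟩ := h 1 one_pos
  obtain ⟨n, hn⟩ := Set.mem_iUnion.mp (hsub ha)
  have h1 : c n < a := hn.1
  have hx : (c n + a) / 2 ∈ Set.Ioo (c n) (d n) :=
    ⟨by linarith, lt_trans (by linarith) hn.2⟩
  have h2 := ((hcd n).2 hx).1
  linarith

lemma hasStepIntegral_chi_Icc {a b t : F} (hat : a < t) (htb : t ≤ b) :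
    HasStepIntegral a b (chi (Set.Icc a t)) (t - a) := by
  rcases eq_or_lt_of_le htb with rfl | hlt
  · refine ⟨1, fun i => match i with | 0 => a | _ => t, fun _ => 1, rfl, rfl, ?_, ?_, ?_⟩
    · intro i hi
      interval_cases i
      exact hat
    · intro i hi u hu
      interval_cases i
      exact chi_of_mem (Set.mem_Icc.mpr ⟨(Set.mem_Ioo.mp hu).1.le, (Set.mem_Ioo.mp hu).2.le⟩)
    · simp
  · refine ⟨2, fun i => match i with | 0 => a | 1 => t | _ => b,
      fun i => match i with | 0 => 1 | _ => 0, rfl, rfl, ?_, ?_, ?_⟩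
    · intro i hi
      interval_cases i
      · exact hat
      · exact hlt
    · intro i hi u hu
      interval_cases i
      · exact chi_of_mem (Set.mem_Icc.mpr ⟨(Set.mem_Ioo.mp hu).1.le, (Set.mem_Ioo.mp hu).2.le⟩)
      · exact chi_of_not_mem fun hc => absurd (Set.mem_Icc.mp hc).2
          (not_le.mpr (Set.mem_Ioo.mp hu).1)
    · rw [Finset.sum_range_succ, Finset.sum_range_succ, Finset.sum_range_zero]
      simp

lemma isStepOn_of_hasStepIntegral {a b : F} {φ : F → F} {I : F}
    (h : HasStepIntegral a b φ I) : IsStepOn a b φ := by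
  obtain ⟨n, x, M, h1, h2, h3, h4, _⟩ := h
  exact ⟨n, x, h1, h2, h3, fun i hi => ⟨M i, h4 i hi⟩⟩

lemma main_counterexample {a b : F} (hab : a < b) (t : ℕ → F)
    (ht1 : ∀ n, a < t n) (ht2 : ∀ n, t n ≤ b) (htd : ∀ n, t (n + 1) ≤ t n)
    (hni : ∀ I : F, ¬ SeqConv (fun n => t n - a) I) :
    ∃ E ⊆ Set.Icc a b, MeasSet a b E ∧ ¬ HasLebMeasure a b E := by
  have htmono : ∀ m n, m ≤ n → t n ≤ t m := fun m n h => antitone_nat_of_succ_le htd h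
  set E : Set F := {x | x ∈ Set.Icc a b ∧ ∀ n, x ≤ t n} with hE
  have hEsub : E ⊆ Set.Icc a b := fun x hx => hx.1
  have haE : a ∈ E := ⟨⟨le_rfl, hab.le⟩, fun n => (ht1 n).le⟩
  have happrox : ApproxSeq a b (fun n => chi (Set.Icc a (t n))) (chi E) := by
    refine ⟨fun n => isStepOn_of_hasStepIntegral (hasStepIntegral_chi_Icc (ht1 n) (ht2 n)),
      fun n x _ => Set.indicator_nonneg (fun _ _ => zero_le_one) x, ?_, ?_⟩
    · intro n x _
      show chi (Set.Icc a (t (n + 1))) x ≤ chi (Set.Icc a (t n)) x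
      by_cases hx : x ∈ Set.Icc a (t (n + 1))
      · rw [chi_of_mem hx, chi_of_mem (Set.mem_Icc.mpr ⟨(Set.mem_Icc.mp hx).1,
          (Set.mem_Icc.mp hx).2.trans (htd n)⟩)]
      · rw [chi_of_not_mem hx]
        exact Set.indicator_nonneg (fun _ _ => zero_le_one) x
    · show NullSet a b
        {x ∈ Set.Icc a b | ¬ SeqConv (fun n => chi (Set.Icc a (t n)) x) (chi E x)}
      have hempty : {x ∈ Set.Icc a b |
          ¬ SeqConv (fun n => chi (Set.Icc a (t n)) x) (chi E x)} = ∅ := by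
        ext x
        simp only [Set.mem_setOf_eq, Set.mem_empty_iff_false, iff_false, not_and, not_not]
        intro hx
        by_cases hxE : x ∈ E
        · refine seqConv_of_eventually ⟨0, fun n _ => ?_⟩
          rw [chi_of_mem (Set.mem_Icc.mpr ⟨hx.1, hxE.2 n⟩), chi_of_mem hxE]
        · have hex : ∃ m, t m < x := by
            by_contra hc
            push_neg at hc
            exact hxE ⟨hx, hc⟩
          obtain ⟨m, hm⟩ := hex
          refine seqConv_of_eventually ⟨m, fun n hn => ?_⟩
          have hnot : x ∉ Set.Icc a (t n) :=
            fun hc => absurd hc.2 (not_le.mpr (lt_of_le_of_lt (htmono m n hn) hm))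
          rw [chi_of_not_mem hnot, chi_of_not_mem hxE]
      rw [hempty]
      exact nullSet_empty hab.le
  refine ⟨E, hEsub, ⟨_, happrox⟩, ?_⟩
  rintro (hnull | ⟨I, hI⟩)
  · exact not_nullSet_of_left_mem haE hnull
  · exact hni I (hI.2 _ happrox (fun n => t n - a)
      (fun n => hasStepIntegral_chi_Icc (ht1 n) (ht2 n)))

open Classical in
noncomputable def bis (A : Set F) (a0 b0 : F) : ℕ → F × F
  | 0 => (a0, b0)
  | n + 1 =>
    if ((bis A a0 b0 n).1 + (bis A a0 b0 n).2) / 2 ∈ A then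
      (((bis A a0 b0 n).1 + (bis A a0 b0 n).2) / 2, (bis A a0 b0 n).2)
    else ((bis A a0 b0 n).1, ((bis A a0 b0 n).1 + (bis A a0 b0 n).2) / 2)

lemma bis_spec {A : Set F} (hlt : ∀ x ∈ A, ∀ y ∉ A, x < y) {a0 b0 : F}
    (ha0 : a0 ∈ A) (hb0 : b0 ∉ A) :
    ∀ n, (bis A a0 b0 n).1 ∈ A ∧ (bis A a0 b0 n).2 ∉ A ∧
      (bis A a0 b0 n).2 - (bis A a0 b0 n).1 = (b0 - a0) * (1 / 2) ^ n := by
  intro n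
  induction n with
  | zero => exact ⟨ha0, hb0, by simp [bis]⟩
  | succ n ih =>
    obtain ⟨h1, h2, h3⟩ := ih
    rw [bis]
    split_ifs with hm
    · exact ⟨hm, h2, by linear_combination h3 / 2⟩
    · exact ⟨h1, hm, by linear_combination h3 / 2⟩

lemma bis_snd_succ_le {A : Set F} (hlt : ∀ x ∈ A, ∀ y ∉ A, x < y) {a0 b0 : F}
    (ha0 : a0 ∈ A) (hb0 : b0 ∉ A) (n : ℕ) :
    (bis A a0 b0 (n + 1)).2 ≤ (bis A a0 b0 n).2 := by
  obtain ⟨h1, h2, _⟩ := bis_spec hlt ha0 hb0 n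
  have hfs : (bis A a0 b0 n).1 < (bis A a0 b0 n).2 := hlt _ h1 _ h2
  rw [bis]
  split_ifs with hm
  · exact le_rfl
  · simp only
    linarith

end ProofAux
theorem not_cutAxiom_implies_not_lebesgueMeasureProperty (F : Type*) [Field F] [LinearOrder F] [IsStrictOrderedRing F]
    (hCA : ¬ CutAxiom F) :
    ∃ a b : F, a ≤ b ∧ ∃ E ⊆ Set.Icc a b, MeasSet a b E ∧ ¬ HasLebMeasure a b E := by
  rw [CutAxiom] at hCA
  push_neg at hCA
  obtain ⟨A, hcut, hnc⟩ := hCA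
  obtain ⟨⟨a0, ha0⟩, hne, hlt⟩ := hcut
  have hb0ex : ∃ b0, b0 ∉ A := by
    by_contra h
    push_neg at h
    exact hne (Set.eq_univ_of_forall h)
  obtain ⟨b0, hb0⟩ := hb0ex
  have hab : a0 < b0 := hlt a0 ha0 b0 hb0
  by_cases hd : ∃ δ : F, 0 < δ ∧ ∀ n : ℕ, δ ≤ (1 / 2 : F) ^ n
  · -- non-Archimedean-type case: use t n = (1/2)^n on [0,1]
    obtain ⟨δ, hδ, hδle⟩ := hd
    refine ⟨0, 1, zero_le_one, ?_⟩
    refine main_counterexample zero_lt_one (fun n => (1 / 2 : F) ^ n)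
      (fun n => pow_pos (by norm_num) n) (fun n => pow_le_one₀ (by norm_num) (by norm_num))
      (fun n => ?_) (fun I hI => ?_)
    · show (1 / 2 : F) ^ (n + 1) ≤ (1 / 2 : F) ^ n
      rw [pow_succ]
      exact mul_le_of_le_one_right (pow_pos (by norm_num) n).le (by norm_num)
    · obtain ⟨N, hN⟩ := hI (δ / 4) (by positivity)
      have h1 := hN N le_rfl
      have h2 := hN (N + 1) (by omega)
      simp only [Set.mem_Ioo, sub_zero] at h1 h2
      have hps : (1 / 2 : F) ^ (N + 1) * 2 = (1 / 2 : F) ^ N := by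
        rw [pow_succ]; ring
      have hδN := hδle (N + 1)
      obtain ⟨h1a, h1b⟩ := h1
      obtain ⟨h2a, h2b⟩ := h2
      linarith
  · -- otherwise: (1/2)^n gets arbitrarily small; bisect the gap
    push_neg at hd
    set t : ℕ → F := fun n => (bis A a0 b0 n).2 with ht
    have hspec := bis_spec hlt ha0 hb0
    have htd : ∀ n, t (n + 1) ≤ t n := bis_snd_succ_le hlt ha0 hb0
    have htmono : ∀ m n, m ≤ n → t n ≤ t m := fun m n h => antitone_nat_of_succ_le htd h
    have ht1 : ∀ n, a0 < t n := fun n => hlt a0 ha0 _ (hspec n).2.1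
    have ht2 : ∀ n, t n ≤ b0 := by
      intro n
      have := htmono 0 n (Nat.zero_le n)
      simpa [ht, bis] using this
    refine ⟨a0, b0, hab.le, ?_⟩
    refine main_counterexample hab t ht1 ht2 htd (fun I hI => ?_)
    refine hnc (I + a0) (fun x hx y hy => ⟨?_, ?_⟩)
    · by_contra hcx
      push_neg at hcx
      obtain ⟨N, hN⟩ := hI (x - (I + a0)) (by linarith)
      have h1 := hN N le_rfl
      simp only [Set.mem_Ioo] at h1
      have h2 : x < t N := hlt x hx (t N) (hspec N).2.1
      linarith [h1.2]
    · by_contra hcy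
      push_neg at hcy
      have hε : 0 < (I + a0 - y) / 2 := by linarith
      obtain ⟨N, hN⟩ := hI ((I + a0 - y) / 2) hε
      have hba : (0 : F) < b0 - a0 := by linarith
      obtain ⟨m, hm⟩ := hd ((I + a0 - y) / 2 / (b0 - a0)) (by positivity)
      set n := max N m with hn
      have h1 := hN n (le_max_left N m)
      simp only [Set.mem_Ioo] at h1
      have hwid : t n - (bis A a0 b0 n).1 = (b0 - a0) * (1 / 2) ^ n := (hspec n).2.2
      have hpow : (1 / 2 : F) ^ n ≤ (1 / 2 : F) ^ m :=
        pow_le_pow_of_le_one (by norm_num) (by norm_num) (le_max_right N m)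
      have hw2 : (b0 - a0) * (1 / 2 : F) ^ n < (I + a0 - y) / 2 := by
        calc (b0 - a0) * (1 / 2 : F) ^ n ≤ (b0 - a0) * (1 / 2 : F) ^ m :=
              mul_le_mul_of_nonneg_left hpow hba.le
          _ < (b0 - a0) * ((I + a0 - y) / 2 / (b0 - a0)) :=
              mul_lt_mul_of_pos_left hm hba
          _ = (I + a0 - y) / 2 := by field_simp
      have hfy : (bis A a0 b0 n).1 < y := hlt _ (hspec n).1 y hy
      linarith [h1.1]

end Littlewood
end
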